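/- If A = I − E is an n×n real matrix with |e_{ij}| ≤ ε for all 1 ≤ i,j ≤ n, and nε ≤ 1, then det(A) ≥ 1 − nε. -/

import Mathlib

open Matrix

set_option maxHeartbeats 1000000 in
lemma ostrowski_aux : ∀ (n : ℕ) (ε : ℝ), 0 ≤ ε → (n : ℝ) * ε ≤ 1 →
    ∀ E : Matrix (Fin n) (Fin n) ℝ, (∀ i j, |E i j| ≤ ε) →
    1 - (n : ℝ) * ε ≤ ((1 : Matrix (Fin n) (Fin n) ℝ) - E).det := by
  intro n
  induction n with
  | zero =>
    intro ε hε _ E _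
    simp [Matrix.det_fin_zero]
  | succ n ih =>
    intro ε hε hsize E hE
    by_cases hn : n = 0
    · subst hn
      rw [Matrix.det_fin_one]
      have := abs_le.mp (hE 0 0)
      simp only [Matrix.sub_apply, Matrix.one_apply_eq]
      push_cast
      linarith [this.2]
    · have hn1 : (1 : ℝ) ≤ (n : ℝ) := by
        exact_mod_cast Nat.one_le_iff_ne_zero.mpr hn
      have hcast : ((n + 1 : ℕ) : ℝ) = (n : ℝ) + 1 := by push_cast; ring
      rw [hcast] at hsize
      have hεlt : ε < 1 := by nlinarith
      set A : Matrix (Fin (n + 1)) (Fin (n + 1)) ℝ := 1 - E with hAdef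
      have e : Fin 1 ⊕ Fin n ≃ Fin (n + 1) :=
        finSumFinEquiv.trans (finCongr (Nat.add_comm 1 n))
      set i₀ : Fin (n + 1) := e (Sum.inl 0) with hi₀
      set ι : Fin n → Fin n.succ := fun j => e (Sum.inr j) with hι
      have hιinj : Function.Injective ι := fun a b h => by
        simpa using Sum.inr.inj (e.injective h)
      have hιne : ∀ j, ι j ≠ i₀ := fun j h => by
        simpa using e.injective h
      have hιne' : ∀ j, i₀ ≠ ι j := fun j h => (hιne j h.symm).elim
      set a : ℝ := A i₀ i₀ with ha
      have haE : a = 1 - E i₀ i₀ := by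
        simp [ha, hAdef, Matrix.sub_apply, Matrix.one_apply_eq]
      have halb : 1 - ε ≤ a := by
        have := abs_le.mp (hE i₀ i₀)
        rw [haE]; linarith [this.2]
      have hapos : 0 < a := by linarith
      have hdet : A.det = (A.submatrix e e).det :=
        (Matrix.det_submatrix_equiv_self e A).symm
      set M := A.submatrix e e with hM
      set W := M.toBlocks₁₁ with hW
      set X := M.toBlocks₁₂ with hX
      set Y := M.toBlocks₂₁ with hY
      set Z := M.toBlocks₂₂ with hZ
      have hWa : W = a • (1 : Matrix (Fin 1) (Fin 1) ℝ) := by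
        ext i j
        fin_cases i; fin_cases j
        simp [hW, Matrix.toBlocks₁₁, hM, Matrix.one_apply, ha]
        rfl
      have hdetW : W.det = a := by
        rw [hWa, Matrix.det_smul]
        simp
      have hUnit : IsUnit W.det := by
        rw [hdetW]; exact isUnit_iff_ne_zero.mpr (ne_of_gt hapos)
      have : Invertible W := W.invertibleOfIsUnitDet hUnit
      have hblocks : M = Matrix.fromBlocks W X Y Z :=
        (Matrix.fromBlocks_toBlocks M).symm
      have hdetM : M.det = W.det * (Z - Y * W⁻¹ * X).det := by
        rw [hblocks, Matrix.det_fromBlocks₁₁, Matrix.invOf_eq_nonsing_inv]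
      have hWinv : W⁻¹ = a⁻¹ • (1 : Matrix (Fin 1) (Fin 1) ℝ) := by
        apply Matrix.inv_eq_right_inv
        rw [hWa, smul_mul_assoc, mul_smul_comm, smul_smul, one_mul,
          mul_inv_cancel₀ (ne_of_gt hapos), one_smul]
      set E' : Matrix (Fin n) (Fin n) ℝ :=
        Matrix.of fun i j => E (ι i) (ι j) + E (ι i) i₀ * a⁻¹ * E i₀ (ι j) with hE'def
      have hS : Z - Y * W⁻¹ * X = 1 - E' := by
        ext i j
        have h1 : Z i j = (if i = j then (1:ℝ) else 0) - E (ι i) (ι j) := by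
          simp only [hZ, Matrix.toBlocks₂₂, Matrix.of_apply, hM,
            Matrix.submatrix_apply, hAdef, Matrix.sub_apply]
          congr 1
          rw [Matrix.one_apply]
          by_cases h : i = j
          · simp [h]
          · have : ι i ≠ ι j := fun hc => h (hιinj hc)
            simp [h, this, Matrix.one_apply]
        have h2 : Y i 0 = -E (ι i) i₀ := by
          simp [hY, Matrix.toBlocks₂₁, hM, hAdef, Matrix.sub_apply,
            Matrix.one_apply_ne (hιne i)]
          rfl
        have h3 : X 0 j = -E i₀ (ι j) := by
          simp [hX, Matrix.toBlocks₁₂, hM, hAdef, Matrix.sub_apply,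
            Matrix.one_apply_ne (hιne' j)]
          rfl
        have h4 : (Y * W⁻¹ * X) i j = Y i 0 * a⁻¹ * X 0 j := by
          rw [hWinv]
          simp [Matrix.mul_apply, Fin.sum_univ_one, Matrix.smul_apply,
            Matrix.one_apply_eq]
          exact Or.inl (mul_comm _ _)
        simp only [Matrix.sub_apply, h1, h4, h2, h3, hE'def, Matrix.of_apply,
          Matrix.one_apply]
        ring
      set ε' : ℝ := ε / (1 - ε) with hε'def
      have h1ε : 0 < 1 - ε := by linarith
      have hε'0 : 0 ≤ ε' := div_nonneg hε (le_of_lt h1ε)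
      have hε'size : (n : ℝ) * ε' ≤ 1 := by
        rw [hε'def, ← mul_div_assoc, div_le_one h1ε]
        nlinarith
      have hE'bound : ∀ i j, |E' i j| ≤ ε' := by
        intro i j
        have hainv : a⁻¹ ≤ (1 - ε)⁻¹ := by
          apply inv_anti₀ h1ε halb
        have hainv0 : 0 ≤ a⁻¹ := le_of_lt (inv_pos.mpr hapos)
        have b1 := abs_le.mp (hE (ι i) (ι j))
        have b2 := hE (ι i) i₀
        have b3 := hE i₀ (ι j)
        have habs : |E (ι i) i₀ * a⁻¹ * E i₀ (ι j)| ≤ ε * a⁻¹ * ε := by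
          rw [abs_mul, abs_mul, abs_of_nonneg hainv0]
          have h0 : (0:ℝ) ≤ |E (ι i) i₀| := abs_nonneg _
          have h0' : (0:ℝ) ≤ |E i₀ (ι j)| := abs_nonneg _
          nlinarith [mul_le_mul b2 b3 h0' hε]
        calc |E' i j| ≤ |E (ι i) (ι j)| + |E (ι i) i₀ * a⁻¹ * E i₀ (ι j)| := by
              simp only [hE'def, Matrix.of_apply]
              exact abs_add_le _ _
          _ ≤ ε + ε * a⁻¹ * ε := by linarith [hE (ι i) (ι j), habs]
          _ ≤ ε' := by
              have hainv2 : a⁻¹ ≤ (1 - ε)⁻¹ := inv_anti₀ h1ε halb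
              have h2 : ε * a⁻¹ * ε ≤ ε * (1 - ε)⁻¹ * ε := by
                nlinarith [mul_le_mul_of_nonneg_left hainv2 (mul_nonneg hε hε)]
              have heq2 : ε + ε * (1 - ε)⁻¹ * ε = ε / (1 - ε) := by
                field_simp
                ring
              rw [hε'def]
              linarith
      have hSdet : 1 - (n : ℝ) * ε' ≤ ((1 : Matrix (Fin n) (Fin n) ℝ) - E').det :=
        ih ε' hε'0 hε'size E' hE'bound
      rw [hdet, hdetM, hdetW, hS]
      have hSnn : 0 ≤ ((1 : Matrix (Fin n) (Fin n) ℝ) - E').det := by linarith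
      have key : (1 - ε) * (1 - (n : ℝ) * ε') ≤ a * ((1 : Matrix (Fin n) (Fin n) ℝ) - E').det := by
        nlinarith
      have heq : (1 - ε) * (1 - (n : ℝ) * ε') = 1 - ((n:ℝ) + 1) * ε := by
        rw [hε'def]
        field_simp
        ring
      rw [hcast]
      linarith [key, heq.symm.le, heq.le]

theorem det_lower_bound_ostrowski
    (n : ℕ) (ε : ℝ) (hε : 0 ≤ ε) (hsize : (n : ℝ) * ε ≤ 1)
    (E A : Matrix (Fin n) (Fin n) ℝ)
    (hA : A = 1 - E)
    (hE : ∀ i j, |E i j| ≤ ε) :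
    1 - (n : ℝ) * ε ≤ A.det := by
  rw [hA]
  exact ostrowski_aux n ε hε hsize E hE
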